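/- arXiv:1711.01668 — 5 statements merged into one kernel-verified Lean document; each statement's English description precedes it below -/
import Mathlib

section
/- Let f, g : {0,1}^ω → {0,1}^ω be homeomorphisms of Cantor space, each having only finitely many distinct restrictions f|_α (respectively g|_α) as α ranges over all finite binary sequences. Then the homeomorphism (f,g) defined by (f,g)(0ζ) = 0·f(ζ) and (f,g)(1ζ) = 1·g(ζ) also has only finitely many distinct restrictions. -/
/-- The Cantor space of infinite binary sequences. -/
abbrev Cantor : Type := ℕ → Bool

/-- Prepend a finite binary word to an infinite binary sequence. -/
def prepend (α : List Bool) (ψ : Cantor) : Cantor :=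
  fun n => if h : n < α.length then α.get ⟨n, h⟩ else ψ (n - α.length)

/-- The basic clopen cone `I_α` of sequences beginning with the finite word `α`. -/
def cone (α : List Bool) : Set Cantor :=
  {ψ | ∀ i (h : i < α.length), ψ i = α.get ⟨i, h⟩}

/-- An asynchronous binary transducer with state set `S` (the initial state `s0`,
the transition function `t` and the output function `o`). -/
structure Transducer (S : Type) where
  s0 : S
  t : S → Bool → S
  o : S → Bool → List Bool

/-- The extended transition function on finite binary words. -/
def Transducer.tStar {S : Type} (T : Transducer S) : S → List Bool → S
  | s, [] => s
  | s, b :: α => T.tStar (T.t s b) α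

/-- The extended output function on finite binary words. -/
def Transducer.oStar {S : Type} (T : Transducer S) : S → List Bool → List Bool
  | _, [] => []
  | s, b :: α => T.o s b ++ T.oStar (T.t s b) α

/-- The length-`n` prefix of an infinite binary sequence, as a finite word. -/
def prefixWord (ψ : Cantor) (n : ℕ) : List Bool := (List.range n).map ψ

/-- `l` is a prefix of the infinite sequence `ψ`. -/
def IsPrefixOf (l : List Bool) (ψ : Cantor) : Prop :=
  ∀ i (h : i < l.length), l.get ⟨i, h⟩ = ψ i

/-- The transducer `T` computes the map `f` on infinite binary sequences: on every input
`ψ` the finite outputs along the run are prefixes of `f ψ`, and their lengths tend to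
infinity, so that the infinite concatenated output is exactly `f ψ`. -/
def Transducer.Computes {S : Type} (T : Transducer S) (f : Cantor → Cantor) : Prop :=
  ∀ ψ : Cantor, (∀ n, IsPrefixOf (T.oStar T.s0 (prefixWord ψ n)) (f ψ)) ∧
    (∀ k, ∃ n, k ≤ (T.oStar T.s0 (prefixWord ψ n)).length)

/-- A homeomorphism of the Cantor space is rational if some asynchronous binary
transducer (with finitely many states) computes it. -/
def IsRational (f : Cantor ≃ₜ Cantor) : Prop :=
  ∃ (n : ℕ) (T : Transducer (Fin n)), T.Computes ⇑f

/-- `r` is the restriction `f|_α`: there is a finite word `β` (necessarily the longest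
common prefix of `f(I_α)`) with `f(αω) = β · r(ω)` for all `ω`, where maximality of `β`
is expressed by saying that the outputs of `r` do not all share their first digit. -/
def IsRestrictionAt (f : Cantor ≃ₜ Cantor) (α : List Bool) (r : Cantor → Cantor) : Prop :=
  ∃ β : List Bool, (∀ ψ : Cantor, f (prepend α ψ) = prepend β (r ψ)) ∧
    ∃ ψ ψ' : Cantor, r ψ 0 ≠ r ψ' 0

/-- The set of all restrictions of `f` as `α` ranges over finite binary words. -/
def restrictions (f : Cantor ≃ₜ Cantor) : Set (Cantor → Cantor) :=
  {r | ∃ α : List Bool, IsRestrictionAt f α r}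

/-- `f` has finitely many distinct restrictions. -/
def FinitelyManyRestrictions (f : Cantor ≃ₜ Cantor) : Prop :=
  (restrictions f).Finite

/-- The group of self-homeomorphisms of the Cantor space, with `(f * g) x = f (g x)`. -/
instance : Group (Cantor ≃ₜ Cantor) where
  mul f g := g.trans f
  one := Homeomorph.refl _
  inv := Homeomorph.symm
  mul_assoc _ _ _ := rfl
  one_mul _ := rfl
  mul_one _ := rfl
  inv_mul_cancel f := Homeomorph.ext fun x => f.symm_apply_apply x

/-- `k` is the homeomorphism `(f, g)`, acting as `f` on `I₀` and as `g` on `I₁`. -/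
def IsPair (k f g : Cantor ≃ₜ Cantor) : Prop :=
  (∀ ζ : Cantor, k (prepend [false] ζ) = prepend [false] (f ζ)) ∧
  (∀ ζ : Cantor, k (prepend [true] ζ) = prepend [true] (g ζ))

/-- `x₀` is the first generator of Thompson's group `F`. -/
def IsX0 (x₀ : Cantor ≃ₜ Cantor) : Prop :=
  (∀ ζ : Cantor, x₀ (prepend [false, false] ζ) = prepend [false] ζ) ∧
  (∀ ζ : Cantor, x₀ (prepend [false, true] ζ) = prepend [true, false] ζ) ∧
  (∀ ζ : Cantor, x₀ (prepend [true] ζ) = prepend [true, true] ζ)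

/-- `f` has small support: it is the identity outside a proper nonempty clopen set. -/
def HasSmallSupport (f : Cantor ≃ₜ Cantor) : Prop :=
  ∃ E : Set Cantor, IsClopen E ∧ E.Nonempty ∧ E ≠ Set.univ ∧ ∀ ψ ∉ E, f ψ = ψ

/-- A group `G` of homeomorphisms of the Cantor space is full if every homeomorphism
that locally agrees with `G` belongs to `G`. -/
def Full (G : Subgroup (Cantor ≃ₜ Cantor)) : Prop :=
  ∀ h : Cantor ≃ₜ Cantor,
    (∀ p : Cantor, ∃ U : Set Cantor, IsOpen U ∧ p ∈ U ∧ ∃ g ∈ G, ∀ x ∈ U, h x = g x) →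
    h ∈ G

/-- A group `G` of homeomorphisms of the Cantor space is flexible if for all proper
nonempty clopen sets `E₁, E₂` there is `g ∈ G` with `g(E₁) ⊆ E₂`. -/
def Flexible (G : Subgroup (Cantor ≃ₜ Cantor)) : Prop :=
  ∀ E₁ E₂ : Set Cantor, IsClopen E₁ → E₁.Nonempty → E₁ ≠ Set.univ →
    IsClopen E₂ → E₂.Nonempty → E₂ ≠ Set.univ →
    ∃ g ∈ G, ⇑g '' E₁ ⊆ E₂

/-- The map flipping every `p`-th binary digit (digits are indexed from 1, so the
digit at index `n : ℕ` is the `(n+1)`-st digit). -/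
def flipFun (p : ℕ) (ψ : Cantor) : Cantor :=
  fun n => if p ∣ (n + 1) then !(ψ n) else ψ n

lemma prepend_nil (ψ : Cantor) : prepend [] ψ = ψ := by
  funext n; simp [prepend]

lemma prepend_cons (b : Bool) (α : List Bool) (ψ : Cantor) :
    prepend (b :: α) ψ = prepend [b] (prepend α ψ) := by
  funext n
  rcases n with _ | m
  · simp [prepend]
  · by_cases h : m < α.length
    · have h1 : m + 1 < (b :: α).length := by simpa using Nat.succ_lt_succ h
      simp [prepend, h, h1]
    · have h1 : ¬ m + 1 < (b :: α).length := by
        simpa using fun hh => h (Nat.lt_of_succ_lt_succ hh)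
      simp [prepend, h, h1]

lemma prepend_single_inj (b : Bool) : Function.Injective (prepend [b]) := by
  intro u v h
  funext n
  have := congrFun h (n + 1)
  simpa [prepend] using this

lemma prepend_cons_zero (b : Bool) (β : List Bool) (ψ : Cantor) :
    prepend (b :: β) ψ 0 = b := by simp [prepend]

/-- if the homeomorphisms `f` and `g` have finitely many restrictions,
then so does the homeomorphism `(f, g)`. -/
theorem pair_finitelyManyRestrictions (f g k : Cantor ≃ₜ Cantor)
    (hf : FinitelyManyRestrictions f) (hg : FinitelyManyRestrictions g)
    (hk : IsPair k f g) : FinitelyManyRestrictions k := by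
  apply Set.Finite.subset ((hf.union hg).insert ⇑k)
  rintro r ⟨α, β, hβ, ψ₀, ψ₁, hne⟩
  match α with
  | [] =>
      left
      -- β must be empty, using surjectivity of k
      match β with
      | [] =>
          funext ψ
          have := hβ ψ
          rw [prepend_nil, prepend_nil] at this
          exact this.symm
      | b :: β' =>
          exfalso
          set c : Cantor := fun _ => !b with hc
          have h1 := hβ (k.symm c)
          rw [prepend_nil, k.apply_symm_apply] at h1
          have h0 := congrFun h1 0
          rw [prepend_cons_zero] at h0
          simp [hc] at h0
  | (false :: α') =>
      right; left
      match β with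
      | [] =>
          exfalso
          apply hne
          have e0 := congrFun (hβ ψ₀) 0
          have e1 := congrFun (hβ ψ₁) 0
          rw [prepend_nil] at e0 e1
          rw [prepend_cons, hk.1, prepend_cons_zero] at e0 e1
          rw [← e0, ← e1]
      | (b :: β') =>
          have hb : b = false := by
            have e0 := congrFun (hβ ψ₀) 0
            rw [prepend_cons, hk.1, prepend_cons_zero, prepend_cons_zero] at e0
            exact e0.symm
          subst hb
          refine ⟨α', β', fun ψ => ?_, ψ₀, ψ₁, hne⟩
          have h1 := hβ ψ
          rw [prepend_cons, hk.1, prepend_cons false β'] at h1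
          exact prepend_single_inj false h1
  | (true :: α') =>
      right; right
      match β with
      | [] =>
          exfalso
          apply hne
          have e0 := congrFun (hβ ψ₀) 0
          have e1 := congrFun (hβ ψ₁) 0
          rw [prepend_nil] at e0 e1
          rw [prepend_cons, hk.2, prepend_cons_zero] at e0 e1
          rw [← e0, ← e1]
      | (b :: β') =>
          have hb : b = true := by
            have e0 := congrFun (hβ ψ₀) 0
            rw [prepend_cons, hk.2, prepend_cons_zero, prepend_cons_zero] at e0
            exact e0.symm
          subst hb
          refine ⟨α', β', fun ψ => ?_, ψ₀, ψ₁, hne⟩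
          have h1 := hβ ψ
          rw [prepend_cons, hk.2, prepend_cons true β'] at h1
          exact prepend_single_inj true h1
end

section
/- Let h be a homeomorphism of {0,1}^ω, and suppose there is a partition of {0,1}^ω into finitely many basic clopen sets I_{α₁}, ..., I_{αₙ} and homeomorphisms g₁, ..., gₙ, each with finitely many distinct restrictions, such that h agrees with gᵢ on I_{αᵢ}. Then h has finitely many distinct restrictions. -/
/-- Auxiliary: a restriction at a fixed word is unique. -/
lemma isRestrictionAt_unique (f : Cantor ≃ₜ Cantor) (α : List Bool)
    (r r' : Cantor → Cantor) (hr : IsRestrictionAt f α r) (hr' : IsRestrictionAt f α r') :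
    r = r' := by
  obtain ⟨β, hβ, ψ0, ψ1, hne⟩ := hr
  obtain ⟨β', hβ', ψ0', ψ1', hne'⟩ := hr'
  have key : ∀ ψ, prepend β (r ψ) = prepend β' (r' ψ) := fun ψ => by
    rw [← hβ ψ, ← hβ' ψ]
  have hlen : β.length = β'.length := by
    by_contra hl
    rcases Nat.lt_or_ge β.length β'.length with hlt | hge
    · -- r ψ 0 would be constant
      have hconst : ∀ ψ, r ψ 0 = β'.get ⟨β.length, hlt⟩ := by
        intro ψ
        have := congrFun (key ψ) β.length
        simp only [prepend, lt_irrefl, dif_neg (lt_irrefl β.length), Nat.sub_self] at this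
        rw [dif_pos hlt] at this
        simpa using this
      exact hne ((hconst ψ0).trans (hconst ψ1).symm)
    · have hlt : β'.length < β.length := by omega
      have hconst : ∀ ψ, r' ψ 0 = β.get ⟨β'.length, hlt⟩ := by
        intro ψ
        have := (congrFun (key ψ) β'.length).symm
        simp only [prepend, dif_neg (lt_irrefl β'.length), Nat.sub_self] at this
        rw [dif_pos hlt] at this
        simpa using this
      exact hne' ((hconst ψ0').trans (hconst ψ1').symm)
  funext ψ m
  have := congrFun (key ψ) (β.length + m)
  simp only [prepend] at this
  rw [dif_neg (by omega), dif_neg (by omega)] at this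
  simpa [hlen, Nat.add_sub_cancel_left] using this

/-- Auxiliary: componentwise equality on a shorter list gives prefix. -/
lemma prefix_of_get_eq {l₁ l₂ : List Bool} (hle : l₁.length ≤ l₂.length)
    (h : ∀ j (hj : j < l₁.length), l₁.get ⟨j, hj⟩ = l₂.get ⟨j, lt_of_lt_of_le hj hle⟩) :
    l₁ <+: l₂ := by
  have : l₁ = l₂.take l₁.length := by
    apply List.ext_get
    · simp [hle]
    · intro i h1 h2
      simp only [List.get_eq_getElem, List.getElem_take]
      simpa only [List.get_eq_getElem] using h i h1
  rw [this]
  exact List.take_prefix _ _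

/-- if `h` agrees on each piece of a finite partition into basic clopen
cones with a homeomorphism having finitely many restrictions, then `h` has finitely
many restrictions. -/
theorem finitelyManyRestrictions_of_partition (h : Cantor ≃ₜ Cantor) (n : ℕ)
    (α : Fin n → List Bool) (g : Fin n → (Cantor ≃ₜ Cantor))
    (hg : ∀ i, FinitelyManyRestrictions (g i))
    (hpart : ∀ ψ : Cantor, ∃! i, ψ ∈ cone (α i))
    (hagree : ∀ i, ∀ ψ ∈ cone (α i), h ψ = g i ψ) :
    FinitelyManyRestrictions h := by
  classical
  -- the finite set of prefixes of the αᵢ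
  set P : Set (List Bool) := ⋃ i, {β | β <+: α i} with hP
  have hPfin : P.Finite := by
    apply Set.finite_iUnion
    intro i
    have : {β | β <+: α i} ⊆ ((α i).inits.toFinset : Set (List Bool)) := by
      intro β hβ
      simp [List.mem_inits]
      exact hβ
    exact Set.Finite.subset (Set.finite_coe_iff.mp (by infer_instance)) this
  -- the big finite superset
  have hsub : restrictions h ⊆
      (⋃ i, restrictions (g i)) ∪ ⋃ a ∈ P, {r | IsRestrictionAt h a r} := by
    rintro r ⟨α₀, hres⟩
    obtain ⟨i, hi, -⟩ := hpart (prepend α₀ (fun _ => false))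
    rcases le_or_gt (α i).length α₀.length with hle | hlt
    · -- α i is a prefix of α₀ : r is a restriction of g i
      left
      have hpre : (α i) <+: α₀ := by
        apply prefix_of_get_eq hle
        intro j hj
        have := hi j hj
        simp only [prepend] at this
        rw [dif_pos (lt_of_lt_of_le hj hle)] at this
        exact this.symm
      refine Set.mem_iUnion.mpr ⟨i, α₀, ?_⟩
      obtain ⟨β, hβ, w⟩ := hres
      refine ⟨β, fun ψ => ?_, w⟩
      rw [← hβ ψ]
      refine (hagree i _ ?_).symm
      intro j hj
      simp only [prepend]
      rw [dif_pos (lt_of_lt_of_le hj hle)]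
      obtain ⟨t, ht⟩ := hpre
      subst ht
      exact List.getElem_append_left hj
    · -- α₀ is a proper prefix of α i
      right
      have hpre : α₀ <+: α i := by
        apply prefix_of_get_eq (le_of_lt hlt)
        intro j hj
        have := hi j (lt_of_lt_of_le hj (le_of_lt hlt))
        simp only [prepend] at this
        rw [dif_pos hj] at this
        exact this
      exact Set.mem_biUnion (Set.mem_iUnion.mpr ⟨i, hpre⟩) hres
  apply Set.Finite.subset _ hsub
  apply Set.Finite.union
  · exact Set.finite_iUnion hg
  · apply Set.Finite.biUnion hPfin
    intro a _
    apply Set.Subsingleton.finite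
    intro r hr r' hr'
    exact isRestrictionAt_unique h a r r' hr hr'
end

section
/- For every rational homeomorphism f of {0,1}^ω there exists a rational homeomorphism g such that g(0ζ) = 0·f(ζ) and g(1ζ) = 1·g(ζ) for all ζ ∈ {0,1}^ω, i.e., g = (f, g). -/
/-! ### Auxiliary development -/


def tl (ψ : Cantor) : Cantor := fun n => ψ (n + 1)

lemma prepend_single_zero (b : Bool) (ζ : Cantor) : prepend [b] ζ 0 = b := by
  simp [prepend]

lemma prepend_single_succ (b : Bool) (ζ : Cantor) (n : ℕ) : prepend [b] ζ (n + 1) = ζ n := by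
  simp [prepend]

lemma cons_tl (ψ : Cantor) : prepend [ψ 0] (tl ψ) = ψ := by
  funext n
  cases n with
  | zero => exact prepend_single_zero _ _
  | succ m => exact prepend_single_succ _ _ _

lemma tl_prepend (b : Bool) (ζ : Cantor) : tl (prepend [b] ζ) = ζ := by
  funext n; exact prepend_single_succ _ _ _

/-- The fixed point `(h, (h, (h, …)))` as a raw map. -/
def pairFix (h : Cantor → Cantor) (ψ : Cantor) : Cantor := fun n =>
  if hx : ∃ m, m ≤ n ∧ ψ m = false then
    if n = Nat.find hx then false
    else h (fun i => ψ (i + Nat.find hx + 1)) (n - (Nat.find hx + 1))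
  else true

lemma pairFix_false (h : Cantor → Cantor) (ζ : Cantor) :
    pairFix h (prepend [false] ζ) = prepend [false] (h ζ) := by
  funext n
  have h0 : prepend [false] ζ 0 = false := prepend_single_zero _ _
  have hx : ∃ m, m ≤ n ∧ prepend [false] ζ m = false := ⟨0, Nat.zero_le n, h0⟩
  have hfind : Nat.find hx = 0 := by
    rw [Nat.find_eq_zero]; exact ⟨Nat.zero_le n, h0⟩
  simp only [pairFix, dif_pos hx, hfind]
  cases n with
  | zero => simp [prepend_single_zero]
  | succ m =>
    rw [if_neg (Nat.succ_ne_zero m), prepend_single_succ]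
    have hfun : (fun i => prepend [false] ζ (i + 0 + 1)) = ζ := by
      funext i; exact prepend_single_succ _ _ _
    rw [hfun]
    norm_num

lemma pairFix_true (h : Cantor → Cantor) (ζ : Cantor) :
    pairFix h (prepend [true] ζ) = prepend [true] (pairFix h ζ) := by
  funext n
  have h0 : prepend [true] ζ 0 = true := prepend_single_zero _ _
  cases n with
  | zero =>
    have hx : ¬ ∃ m, m ≤ 0 ∧ prepend [true] ζ m = false := by
      rintro ⟨m, hm, hf⟩
      interval_cases m
      rw [h0] at hf; simp at hf
    simp only [pairFix, dif_neg hx, prepend_single_zero]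
  | succ m =>
    rw [prepend_single_succ]
    by_cases hx' : ∃ j, j ≤ m ∧ ζ j = false
    · obtain ⟨j, hj, hjf⟩ := hx'
      have hx' : ∃ j, j ≤ m ∧ ζ j = false := ⟨j, hj, hjf⟩
      have hle0 : Nat.find hx' ≤ m := (Nat.find_spec hx').1
      have hx : ∃ mm, mm ≤ m + 1 ∧ prepend [true] ζ mm = false :=
        ⟨Nat.find hx' + 1, by omega,
          by rw [prepend_single_succ]; exact (Nat.find_spec hx').2⟩
      have hle : Nat.find hx' ≤ m := (Nat.find_spec hx').1
      have hfind : Nat.find hx = Nat.find hx' + 1 := by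
        rw [Nat.find_eq_iff]
        refine ⟨⟨by omega, by rw [prepend_single_succ]; exact (Nat.find_spec hx').2⟩, ?_⟩
        intro l hl
        rintro ⟨hlm, hlf⟩
        cases l with
        | zero => rw [h0] at hlf; simp at hlf
        | succ j =>
          rw [prepend_single_succ] at hlf
          exact Nat.find_min hx' (by omega) ⟨by omega, hlf⟩
      simp only [pairFix, dif_pos hx, dif_pos hx', hfind]
      by_cases hmk : m = Nat.find hx'
      · rw [if_pos (by omega), if_pos hmk]
      · rw [if_neg (by omega), if_neg hmk]
        have hfun : (fun i => prepend [true] ζ (i + (Nat.find hx' + 1) + 1)) =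
            (fun i => ζ (i + Nat.find hx' + 1)) := by
          funext i
          have : i + (Nat.find hx' + 1) + 1 = (i + Nat.find hx' + 1) + 1 := by omega
          rw [this, prepend_single_succ]
        rw [hfun]
        congr 1
        omega
    · have hx : ¬ ∃ mm, mm ≤ m + 1 ∧ prepend [true] ζ mm = false := by
        rintro ⟨mm, hmm, hf⟩
        cases mm with
        | zero => rw [h0] at hf; simp at hf
        | succ j =>
          rw [prepend_single_succ] at hf
          exact hx' ⟨j, by omega, hf⟩
      simp only [pairFix, dif_neg hx, dif_neg hx']

lemma pairFix_rec (h : Cantor → Cantor) (ψ : Cantor) :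
    pairFix h ψ = if ψ 0 = false then prepend [false] (h (tl ψ))
      else prepend [true] (pairFix h (tl ψ)) := by
  cases hb : ψ 0 with
  | false =>
    rw [if_pos rfl]
    conv_lhs => rw [← cons_tl ψ, hb]
    exact pairFix_false h (tl ψ)
  | true =>
    rw [if_neg (by simp)]
    conv_lhs => rw [← cons_tl ψ, hb]
    exact pairFix_true h (tl ψ)

lemma pairFix_zero (h : Cantor → Cantor) (ψ : Cantor) : pairFix h ψ 0 = ψ 0 := by
  rw [pairFix_rec]
  cases hb : ψ 0 <;> simp [hb, prepend_single_zero]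

lemma pairFix_succ (h : Cantor → Cantor) (ψ : Cantor) (n : ℕ) :
    pairFix h ψ (n + 1) = if ψ 0 = false then h (tl ψ) n else pairFix h (tl ψ) n := by
  rw [pairFix_rec]
  split <;> rw [prepend_single_succ]

lemma pairFix_comp_coord (h h' : Cantor → Cantor) :
    ∀ (n : ℕ) (ψ : Cantor), pairFix h (pairFix h' ψ) n = pairFix (fun x => h (h' x)) ψ n := by
  intro n
  induction n with
  | zero => intro ψ; rw [pairFix_zero, pairFix_zero, pairFix_zero]
  | succ n ih =>
    intro ψ
    rw [pairFix_succ, pairFix_succ, pairFix_zero]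
    cases hb : ψ 0 with
    | false =>
      rw [if_pos rfl, if_pos rfl]
      have htl : tl (pairFix h' ψ) = h' (tl ψ) := by
        funext i; rw [show tl (pairFix h' ψ) i = pairFix h' ψ (i+1) from rfl,
          pairFix_succ, if_pos hb]
      rw [htl]
    | true =>
      rw [if_neg (by simp), if_neg (by simp)]
      have htl : tl (pairFix h' ψ) = pairFix h' (tl ψ) := by
        funext i; rw [show tl (pairFix h' ψ) i = pairFix h' ψ (i+1) from rfl,
          pairFix_succ, if_neg (by simp [hb])]
      rw [htl, ih]

lemma pairFix_id_coord : ∀ (n : ℕ) (ψ : Cantor), pairFix (fun x => x) ψ n = ψ n := by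
  intro n
  induction n with
  | zero => intro ψ; exact pairFix_zero _ _
  | succ n ih =>
    intro ψ
    rw [pairFix_succ]
    cases hb : ψ 0 with
    | false => rw [if_pos rfl]; rfl
    | true => rw [if_neg (by simp)]; exact ih (tl ψ)

lemma tl_continuous : Continuous tl :=
  continuous_pi fun i => continuous_apply (i + 1)

lemma pairFix_continuous (h : Cantor → Cantor) (hc : Continuous h) :
    Continuous (pairFix h) := by
  apply continuous_pi
  intro n
  induction n with
  | zero =>
    simp only [pairFix_zero]
    exact continuous_apply 0
  | succ n ih =>
    have heq : (fun ψ => pairFix h ψ (n + 1)) =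
        fun ψ : Cantor => cond (ψ 0) (pairFix h (tl ψ) n) (h (tl ψ) n) := by
      funext ψ
      rw [pairFix_succ]
      cases hb : ψ 0 <;> simp [hb]
    rw [heq]
    have hA : Continuous fun ψ : Cantor => pairFix h (tl ψ) n := ih.comp tl_continuous
    have hB : Continuous fun ψ : Cantor => h (tl ψ) n :=
      (continuous_apply n).comp (hc.comp tl_continuous)
    exact (continuous_of_discreteTopology
      (f := fun p : Bool × Bool × Bool => cond p.1 p.2.1 p.2.2)).comp
      ((continuous_apply 0).prodMk (hA.prodMk hB))

/-- The homeomorphism `g = (f, g)`. -/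
def pairHomeo (f : Cantor ≃ₜ Cantor) : Cantor ≃ₜ Cantor where
  toFun := pairFix ⇑f
  invFun := pairFix ⇑f.symm
  left_inv ψ := by
    funext n
    rw [pairFix_comp_coord]
    have : (fun x => f.symm (f x)) = fun x : Cantor => x := by
      funext x; exact f.symm_apply_apply x
    rw [this, pairFix_id_coord]
  right_inv ψ := by
    funext n
    rw [pairFix_comp_coord]
    have : (fun x => f (f.symm x)) = fun x : Cantor => x := by
      funext x; exact f.apply_symm_apply x
    rw [this, pairFix_id_coord]
  continuous_toFun := pairFix_continuous _ f.continuous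
  continuous_invFun := pairFix_continuous _ f.symm.continuous

lemma prefixWord_succ (ψ : Cantor) (n : ℕ) :
    prefixWord ψ (n + 1) = ψ 0 :: prefixWord (tl ψ) n := by
  unfold prefixWord
  rw [List.range_succ_eq_map, List.map_cons, List.map_map]
  rfl

lemma isPrefixOf_nil (ψ : Cantor) : IsPrefixOf [] ψ := by
  intro i h; simp at h

lemma isPrefixOf_cons (b : Bool) (l : List Bool) (ψ : Cantor)
    (hb : ψ 0 = b) (hl : IsPrefixOf l (tl ψ)) : IsPrefixOf (b :: l) ψ := by
  intro i h
  cases i with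
  | zero => simpa using hb.symm
  | succ j =>
    have := hl j (by simpa using h)
    simpa [tl] using this

/-- Extend a transducer for `f` to one for `g = (f, g)`: a fresh initial state
(`Fin.last n`) which copies the input, loops on `1` and enters the old machine on `0`. -/
def extT {n : ℕ} (T : Transducer (Fin n)) : Transducer (Fin (n + 1)) where
  s0 := Fin.last n
  t s b := if h : s = Fin.last n then (if b then Fin.last n else Fin.castSucc T.s0)
    else Fin.castSucc (T.t (s.castPred h) b)
  o s b := if h : s = Fin.last n then [b] else T.o (s.castPred h) b

lemma extT_t_cast {n : ℕ} (T : Transducer (Fin n)) (s : Fin n) (b : Bool) :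
    (extT T).t s.castSucc b = Fin.castSucc (T.t s b) := by
  simp [extT, (Fin.castSucc_lt_last s).ne, Fin.castPred_castSucc]

lemma extT_o_cast {n : ℕ} (T : Transducer (Fin n)) (s : Fin n) (b : Bool) :
    (extT T).o s.castSucc b = T.o s b := by
  simp [extT, (Fin.castSucc_lt_last s).ne, Fin.castPred_castSucc]

lemma extT_oStar_cast {n : ℕ} (T : Transducer (Fin n)) :
    ∀ (α : List Bool) (s : Fin n), (extT T).oStar s.castSucc α = T.oStar s α := by
  intro α
  induction α with
  | nil => intro s; rfl
  | cons b β ih =>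
    intro s
    show (extT T).o s.castSucc b ++ (extT T).oStar ((extT T).t s.castSucc b) β = _
    rw [extT_o_cast, extT_t_cast, ih]
    rfl

lemma extT_o_last {n : ℕ} (T : Transducer (Fin n)) (b : Bool) :
    (extT T).o (Fin.last n) b = [b] := by simp [extT]

lemma extT_t_last_true {n : ℕ} (T : Transducer (Fin n)) :
    (extT T).t (Fin.last n) true = Fin.last n := by simp [extT]

lemma extT_t_last_false {n : ℕ} (T : Transducer (Fin n)) :
    (extT T).t (Fin.last n) false = Fin.castSucc T.s0 := by simp [extT]

lemma extT_computes {n : ℕ} (T : Transducer (Fin n)) (f : Cantor → Cantor)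
    (hT : T.Computes f) : (extT T).Computes (pairFix f) := by
  have pref : ∀ (N : ℕ) (ψ : Cantor),
      IsPrefixOf ((extT T).oStar (Fin.last n) (prefixWord ψ N)) (pairFix f ψ) := by
    intro N
    induction N with
    | zero => intro ψ; exact isPrefixOf_nil _
    | succ N ih =>
      intro ψ
      rw [prefixWord_succ]
      cases hb : ψ 0 with
      | false =>
        show IsPrefixOf ((extT T).o (Fin.last n) false ++
          (extT T).oStar ((extT T).t (Fin.last n) false) (prefixWord (tl ψ) N)) _
        rw [extT_o_last, extT_t_last_false, extT_oStar_cast]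
        refine isPrefixOf_cons _ _ _ (by rw [pairFix_zero, hb]) ?_
        have htl : tl (pairFix f ψ) = f (tl ψ) := by
          funext i
          rw [show tl (pairFix f ψ) i = pairFix f ψ (i+1) from rfl, pairFix_succ, if_pos hb]
        rw [htl]
        exact (hT (tl ψ)).1 N
      | true =>
        show IsPrefixOf ((extT T).o (Fin.last n) true ++
          (extT T).oStar ((extT T).t (Fin.last n) true) (prefixWord (tl ψ) N)) _
        rw [extT_o_last, extT_t_last_true]
        refine isPrefixOf_cons _ _ _ (by rw [pairFix_zero, hb]) ?_
        have htl : tl (pairFix f ψ) = pairFix f (tl ψ) := by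
          funext i
          rw [show tl (pairFix f ψ) i = pairFix f ψ (i+1) from rfl, pairFix_succ,
            if_neg (by simp [hb])]
        rw [htl]
        exact ih (tl ψ)
  have len : ∀ (k : ℕ) (ψ : Cantor), ∃ N,
      k ≤ ((extT T).oStar (Fin.last n) (prefixWord ψ N)).length := by
    intro k
    induction k with
    | zero => intro ψ; exact ⟨0, Nat.zero_le _⟩
    | succ k ih =>
      intro ψ
      cases hb : ψ 0 with
      | false =>
        obtain ⟨N, hN⟩ := (hT (tl ψ)).2 k
        refine ⟨N + 1, ?_⟩
        rw [prefixWord_succ, hb]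
        show _ ≤ ((extT T).o (Fin.last n) false ++
          (extT T).oStar ((extT T).t (Fin.last n) false) (prefixWord (tl ψ) N)).length
        rw [extT_o_last, extT_t_last_false, extT_oStar_cast, List.length_append]
        simp only [List.length_cons, List.length_nil]
        omega
      | true =>
        obtain ⟨N, hN⟩ := ih (tl ψ)
        refine ⟨N + 1, ?_⟩
        rw [prefixWord_succ, hb]
        show _ ≤ ((extT T).o (Fin.last n) true ++
          (extT T).oStar ((extT T).t (Fin.last n) true) (prefixWord (tl ψ) N)).length
        rw [extT_o_last, extT_t_last_true, List.length_append]
        simp only [List.length_cons, List.length_nil]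
        omega
  intro ψ
  exact ⟨fun N => pref N ψ, fun k => len k ψ⟩

/-- for every rational homeomorphism `f` there is a rational
homeomorphism `g` with `g = (f, g)`. -/
theorem exists_pair_fixed_point (f : Cantor ≃ₜ Cantor) (hf : IsRational f) :
    ∃ g : Cantor ≃ₜ Cantor, IsRational g ∧ IsPair g f g := by
  obtain ⟨n, T, hT⟩ := hf
  refine ⟨pairHomeo f, ⟨n + 1, extT T, ?_⟩, fun ζ => pairFix_false ⇑f ζ,
    fun ζ => pairFix_true ⇑f ζ⟩
  exact extT_computes T ⇑f hT
end

section
/- Let x₀ be the homeomorphism of {0,1}^ω defined by x₀(00ζ) = 0ζ, x₀(01ζ) = 10ζ, x₀(1ζ) = 11ζ. Let g, h be homeomorphisms of {0,1}^ω with h = (g, h). Then x₀⁻¹ ∘ (1, h) ∘ x₀ = ((1, g), 1) ∘ (1, h), where 1 denotes the identity. Consequently ((1,g),1) is a commutator x₀⁻¹ k x₀ k⁻¹ with k = (1,h). -/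
lemma one_apply' (ψ : Cantor) : (1 : Cantor ≃ₜ Cantor) ψ = ψ := rfl

lemma mul_apply' (f g : Cantor ≃ₜ Cantor) (ψ : Cantor) : (f * g) ψ = f (g ψ) := rfl

lemma inv_apply' (f : Cantor ≃ₜ Cantor) (ψ : Cantor) : f⁻¹ ψ = f.symm ψ := rfl

lemma symm_apply_eq' (f : Cantor ≃ₜ Cantor) {y z : Cantor} :
    f.symm y = z ↔ y = f z := Equiv.symm_apply_eq f.toEquiv

lemma prepend_pair (a b : Bool) (ζ : Cantor) :
    prepend [a] (prepend [b] ζ) = prepend [a, b] ζ := by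
  funext n
  rcases n with _ | n
  · rfl
  · rcases n with _ | n <;> rfl

lemma eq_prepend_two (ψ : Cantor) :
    ψ = prepend [ψ 0, ψ 1] (fun n => ψ (n + 2)) := by
  funext n
  rcases n with _ | n
  · rfl
  · rcases n with _ | n <;> rfl

lemma eq_prepend_one (ψ : Cantor) :
    ψ = prepend [ψ 0] (fun n => ψ (n + 1)) := by
  funext n
  rcases n with _ | n <;> rfl

/-- if `h = (g, h)`, `k = (1, h)`, `u = (1, g)` and `w = ((1, g), 1)`,
then `x₀⁻¹ k x₀ = w k`, and consequently `w` is the commutator `x₀⁻¹ k x₀ k⁻¹`. -/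
theorem conjugation_identity (x₀ g h k u w : Cantor ≃ₜ Cantor) (hx : IsX0 x₀)
    (hh : IsPair h g h) (hk : IsPair k 1 h) (hu : IsPair u 1 g) (hw : IsPair w u 1) :
    x₀⁻¹ * k * x₀ = w * k ∧ w = x₀⁻¹ * k * x₀ * k⁻¹ := by
  obtain ⟨hx1, hx2, hx3⟩ := hx
  obtain ⟨hh1, hh2⟩ := hh
  obtain ⟨hk1, hk2⟩ := hk
  obtain ⟨hu1, hu2⟩ := hu
  obtain ⟨hw1, hw2⟩ := hw
  have main : x₀⁻¹ * k * x₀ = w * k := by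
    apply Homeomorph.ext
    intro ψ
    have lhs : ∀ ψ, (x₀⁻¹ * k * x₀) ψ = x₀.symm (k (x₀ ψ)) := fun _ => rfl
    have rhs : ∀ ψ, (w * k) ψ = w (k ψ) := fun _ => rfl
    rw [lhs, rhs]
    rcases hb0 : ψ 0 with _ | _
    · -- ψ 0 = false
      rcases hb1 : ψ 1 with _ | _
      · -- ψ = prepend [false, false] ζ
        set ζ := fun n => ψ (n + 2) with hζ
        have hψ : ψ = prepend [false, false] ζ := by
          have := eq_prepend_two ψ; rw [hb0, hb1] at this; exact this
        rw [hψ, hx1, ← prepend_pair, hk1, one_apply', prepend_pair]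
        rw [symm_apply_eq' x₀, ← prepend_pair, hk1, one_apply', hw1, hu1, one_apply',
          prepend_pair, hx1]
      · -- ψ = prepend [false, true] ζ
        set ζ := fun n => ψ (n + 2) with hζ
        have hψ : ψ = prepend [false, true] ζ := by
          have := eq_prepend_two ψ; rw [hb0, hb1] at this; exact this
        rw [hψ, hx2, ← prepend_pair, hk2, hh1, prepend_pair]
        rw [symm_apply_eq' x₀]
        conv_rhs => rw [← prepend_pair, hk1, one_apply', hw1, hu2, prepend_pair, hx2]
    · -- ψ = prepend [true] ζ
      set ζ := fun n => ψ (n + 1) with hζ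
      have hψ : ψ = prepend [true] ζ := by
        have := eq_prepend_one ψ; rw [hb0] at this; exact this
      rw [hψ, hx3, ← prepend_pair, hk2, hh2, prepend_pair]
      rw [symm_apply_eq' x₀, hk2, hw2, one_apply', hx3]
  refine ⟨main, ?_⟩
  rw [main, mul_assoc, mul_inv_cancel, mul_one]
end

section
/- Let G be a full, flexible group of homeomorphisms of Cantor space {0,1}^ω such that: (1) for all g ∈ G, both (1,g) and (g,1) lie in G, and every element of G supported on I₀ or I₁ has this form; (2) for all g ∈ G there exists h ∈ G with h = (g,h); (3) the first generator x₀ of Thompson's group F lies in G. Then G is simple. -/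
namespace FFS


def cons (b : Bool) (ψ : Cantor) : Cantor := fun n => match n with
  | 0 => b
  | Nat.succ k => ψ k

@[simp] lemma cons_zero (b : Bool) (ψ : Cantor) : cons b ψ 0 = b := rfl
@[simp] lemma cons_succ (b : Bool) (ψ : Cantor) (k : ℕ) : cons b ψ (k+1) = ψ k := rfl

def shift (ψ : Cantor) : Cantor := fun n => ψ (n+1)

lemma cons_shift (ψ : Cantor) : cons (ψ 0) (shift ψ) = ψ := by
  funext n; cases n <;> rfl

lemma cons_inj {b : Bool} {ψ ψ' : Cantor} (h : cons b ψ = cons b ψ') : ψ = ψ' := by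
  funext n; have := congrFun h (n+1); simpa using this

lemma prepend_one (b : Bool) (ζ : Cantor) : prepend [b] ζ = cons b ζ := by
  funext n
  cases n with
  | zero => rfl
  | succ k => simp [prepend, cons]

lemma prepend_two (a b : Bool) (ζ : Cantor) : prepend [a,b] ζ = cons a (cons b ζ) := by
  funext n
  match n with
  | 0 => rfl
  | 1 => rfl
  | (k+2) => simp [prepend, cons]

lemma mem_cone_one {ψ : Cantor} {b : Bool} : ψ ∈ cone [b] ↔ ψ 0 = b := by
  constructor
  · intro h; exact h 0 (by norm_num)
  · intro h i hi
    have hi1 : i < 1 := by simpa using hi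
    match i, hi1 with
    | 0, _ => simpa using h

lemma mem_cone_two {ψ : Cantor} {a b : Bool} : ψ ∈ cone [a,b] ↔ ψ 0 = a ∧ ψ 1 = b := by
  constructor
  · intro h; exact ⟨h 0 (by norm_num), h 1 (by norm_num)⟩
  · rintro ⟨h0, h1⟩ i hi
    have hi2 : i < 2 := by simpa using hi
    match i, hi2 with
    | 0, _ => simpa using h0
    | 1, _ => simpa using h1

lemma mem_cone_three {ψ : Cantor} {a b c : Bool} :
    ψ ∈ cone [a,b,c] ↔ ψ 0 = a ∧ ψ 1 = b ∧ ψ 2 = c := by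
  constructor
  · intro h; exact ⟨h 0 (by norm_num), h 1 (by norm_num), h 2 (by norm_num)⟩
  · rintro ⟨h0, h1, h2⟩ i hi
    have hi3 : i < 3 := by simpa using hi
    match i, hi3 with
    | 0, _ => simpa using h0
    | 1, _ => simpa using h1
    | 2, _ => simpa using h2

lemma isClopen_digit (i : ℕ) (b : Bool) : IsClopen {ψ : Cantor | ψ i = b} := by
  have h : {ψ : Cantor | ψ i = b} = (fun ψ : Cantor => ψ i) ⁻¹' {b} := rfl
  rw [h]
  exact (isClopen_discrete {b}).preimage (continuous_apply i)

lemma isClopen_cone (α : List Bool) : IsClopen (cone α) := by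
  have h : cone α = ⋂ i : Fin α.length, {ψ : Cantor | ψ i.1 = α.get i} := by
    ext ψ
    simp only [cone, Set.mem_setOf_eq, Set.mem_iInter]
    constructor
    · intro h i; exact h i.1 i.2
    · intro h i hi; exact h ⟨i, hi⟩
  rw [h]
  exact ⟨isClosed_iInter fun i => (isClopen_digit _ _).isClosed,
    isOpen_iInter_of_finite fun i => (isClopen_digit _ _).isOpen⟩

lemma mem_cone_prefixWord {φ ψ : Cantor} {n : ℕ} :
    φ ∈ cone (prefixWord ψ n) ↔ ∀ i, i < n → φ i = ψ i := by
  constructor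
  · intro h i hi
    have hi' : i < (prefixWord ψ n).length := by simp [prefixWord, hi]
    have := h i hi'
    simpa [prefixWord] using this
  · intro h i hi
    have hi' : i < n := by simpa [prefixWord] using hi
    have := h i hi'
    simpa [prefixWord] using this

lemma exists_cone_subset {U : Set Cantor} (hU : IsOpen U) {ψ : Cantor} (hψ : ψ ∈ U) :
    ∃ n, cone (prefixWord ψ n) ⊆ U := by
  rcases isOpen_pi_iff.mp hU ψ hψ with ⟨I, u, hIu, hsub⟩
  refine ⟨(I.sup id) + 1, fun φ hφ => hsub ?_⟩
  rw [Set.mem_pi]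
  intro i hi
  have hlt : i < I.sup id + 1 := Nat.lt_succ_of_le (Finset.le_sup (f := id) hi)
  rw [mem_cone_prefixWord.mp hφ i hlt]
  exact (hIu i hi).2


abbrev HH := Cantor ≃ₜ Cantor

lemma mul_apply (f g : HH) (ψ : Cantor) : (f * g) ψ = f (g ψ) := rfl
lemma one_apply (ψ : Cantor) : (1 : HH) ψ = ψ := rfl
lemma inv_apply_apply (f : HH) (ψ : Cantor) : f⁻¹ (f ψ) = ψ := f.symm_apply_apply ψ
lemma apply_inv_apply (f : HH) (ψ : Cantor) : f (f⁻¹ ψ) = ψ := f.apply_symm_apply ψ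

lemma fixes_of_fixes_compl {f : HH} {S : Set Cantor} (hf : ∀ x ∉ S, f x = x) :
    ∀ x ∈ S, f x ∈ S := by
  intro x hx
  by_contra hfx
  have h1 : f (f x) = f x := hf _ hfx
  have h2 := f.injective h1
  rw [h2] at hfx
  exact hfx hx

lemma commute_of_disjoint {f g : HH} {S T : Set Cantor}
    (hf : ∀ x ∉ S, f x = x) (hg : ∀ x ∉ T, g x = x)
    (hST : ∀ x ∈ S, x ∉ T) : ∀ x, f (g x) = g (f x) := by
  intro x
  by_cases hxS : x ∈ S
  · have hxT : x ∉ T := hST x hxS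
    have h1 : g x = x := hg x hxT
    have h2 : f x ∈ S := fixes_of_fixes_compl hf x hxS
    have h3 : g (f x) = f x := hg _ (hST _ h2)
    rw [h1, h3]
  · by_cases hxT : x ∈ T
    · have h1 : f x = x := hf x hxS
      have h2 : g x ∈ T := fixes_of_fixes_compl hg x hxT
      have h3 : f (g x) = g x := hf _ (fun hc => hST _ hc h2)
      rw [h1, h3]
    · rw [hg x hxT, hf x hxS, hg x hxT]



lemma separation {f : HH} (hf : ∃ ψ, f ψ ≠ ψ) :
    ∃ C D : Set Cantor, IsClopen C ∧ IsClopen D ∧ C.Nonempty ∧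
      (∀ x ∈ C, f x ∈ D) ∧ (∀ x ∈ C, x ∉ D) ∧ ∃ ζ, ζ ∉ C ∧ ζ ∉ D := by
  obtain ⟨ψ, hψ⟩ := hf
  obtain ⟨k, hk⟩ : ∃ k, f ψ k ≠ ψ k := by
    by_contra h
    push_neg at h
    exact hψ (funext h)
  have hDopen : IsOpen (cone (prefixWord (f ψ) (k+1))) := (isClopen_cone _).2
  have hfψD : f ψ ∈ cone (prefixWord (f ψ) (k+1)) :=
    mem_cone_prefixWord.mpr (fun i _ => rfl)
  have hpre : IsOpen (⇑f ⁻¹' (cone (prefixWord (f ψ) (k+1)))) :=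
    hDopen.preimage f.continuous
  obtain ⟨n, hn⟩ := exists_cone_subset hpre (show ψ ∈ _ from hfψD)
  set N := max n (k+2) with hNdef
  have hNk : k + 2 ≤ N := le_max_right _ _
  have hnN : n ≤ N := le_max_left _ _
  refine ⟨cone (prefixWord ψ N), cone (prefixWord (f ψ) (k+1)),
    isClopen_cone _, isClopen_cone _,
    ⟨ψ, mem_cone_prefixWord.mpr (fun i _ => rfl)⟩, ?_, ?_, ?_⟩
  · intro x hx
    exact hn (mem_cone_prefixWord.mpr (fun i hi =>
      mem_cone_prefixWord.mp hx i (lt_of_lt_of_le hi hnN)))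
  · intro x hx hxD
    have h1 : x k = ψ k := mem_cone_prefixWord.mp hx k (by omega)
    have h2 : x k = f ψ k := mem_cone_prefixWord.mp hxD k (by omega)
    exact hk (h2 ▸ h1)
  · refine ⟨Function.update ψ (N-1) (!(ψ (N-1))), ?_, ?_⟩
    · intro hc
      have h1 := mem_cone_prefixWord.mp hc (N-1) (by omega)
      rw [Function.update_self] at h1
      exact (Bool.not_ne_self _) h1
    · intro hc
      have h1 := mem_cone_prefixWord.mp hc k (by omega)
      rw [Function.update_of_ne (by omega)] at h1
      exact hk h1.symm

lemma inv_fix {f : HH} {S : Set Cantor} (hf : ∀ x ∉ S, f x = x) :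
    ∀ x ∉ S, f⁻¹ x = x := by
  intro x hx
  have h1 := inv_apply_apply f x
  rwa [hf x hx] at h1

lemma commutator_mem (G : Subgroup HH) (N : Subgroup ↥G) (hN : N.Normal)
    (hflex : Flexible G)
    (E : Set Cantor) (hE : IsClopen E) (hEne : E.Nonempty) (hEuniv : E ≠ Set.univ)
    (g₀ : ↥G) (hg₀N : g₀ ∈ N) (hg₀E : ∀ x ∈ E, (g₀ : HH) x ∉ E)
    (F : Set Cantor) (hF : IsClopen F) (hFne : F.Nonempty) (hFuniv : F ≠ Set.univ)
    (a b : ↥G) (ha : ∀ x ∉ F, (a : HH) x = x) (hb : ∀ x ∉ F, (b : HH) x = x) :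
    a * b * a⁻¹ * b⁻¹ ∈ N := by
  obtain ⟨t, htG, htim⟩ := hflex F E hF hFne hFuniv hE hEne hEuniv
  set T : ↥G := ⟨t, htG⟩ with hT
  have hsupp : ∀ (c : ↥G), (∀ x ∉ F, (c : HH) x = x) →
      ∀ x ∉ E, ((T * c * T⁻¹ : ↥G) : HH) x = x := by
    intro c hc x hx
    have h0 : ((T * c * T⁻¹ : ↥G) : HH) x = t ((c : HH) (t⁻¹ x)) := rfl
    have h1 : t⁻¹ x ∉ F := by
      intro hmem
      exact hx (htim ⟨t⁻¹ x, hmem, apply_inv_apply t x⟩)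
    rw [h0, hc _ h1, apply_inv_apply]
  set A : ↥G := T * a * T⁻¹ with hA
  set B : ↥G := T * b * T⁻¹ with hB
  have hAE : ∀ x ∉ E, (A : HH) x = x := hsupp a ha
  have hBE : ∀ x ∉ E, (B : HH) x = x := hsupp b hb
  have hAinvE : ∀ x ∉ E, ((A : HH))⁻¹ x = x := inv_fix hAE
  have hBinvE : ∀ x ∉ E, ((B : HH))⁻¹ x = x := inv_fix hBE
  set c' : ↥G := g₀ * B⁻¹ * g₀⁻¹ with hc'
  have hc'E : ∀ x ∈ E, (c' : HH) x = x := by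
    intro x hx
    have h0 : (c' : HH) x = (g₀ : HH) (((B : HH))⁻¹ (((g₀ : HH))⁻¹ x)) := rfl
    have h1 : ((g₀ : HH))⁻¹ x ∉ E := by
      intro hmem
      have h2 := hg₀E _ hmem
      rw [apply_inv_apply] at h2
      exact h2 hx
    rw [h0, hBinvE _ h1, apply_inv_apply]
  have hcm : ∀ x, (c' : HH) (((A : HH))⁻¹ x) = ((A : HH))⁻¹ ((c' : HH) x) := by
    refine commute_of_disjoint (S := Eᶜ) (T := E) ?_ hAinvE ?_
    · intro x hx
      exact hc'E x (not_not.mp hx)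
    · intro x hx
      exact hx
  have hcomm' : c' * A⁻¹ = A⁻¹ * c' := by
    apply Subtype.ext
    exact Homeomorph.ext fun x => hcm x
  have hn₁ : B * c' ∈ N := by
    have h1 : B * g₀ * B⁻¹ ∈ N := hN.conj_mem g₀ hg₀N B
    have h2 : B * g₀ * B⁻¹ * g₀⁻¹ ∈ N := N.mul_mem h1 (N.inv_mem hg₀N)
    have h3 : B * c' = B * g₀ * B⁻¹ * g₀⁻¹ := by rw [hc']; group
    rwa [h3]
  have hm : A * (B * c') * A⁻¹ * (B * c')⁻¹ ∈ N := by
    have h1 := hN.conj_mem _ hn₁ A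
    exact N.mul_mem h1 (N.inv_mem hn₁)
  have hkey : A * (B * c') * A⁻¹ * (B * c')⁻¹ = A * B * A⁻¹ * B⁻¹ := by
    have h1 : A * (B * c') * A⁻¹ * (B * c')⁻¹
        = A * B * (c' * A⁻¹) * (c'⁻¹ * B⁻¹) := by group
    rw [h1, hcomm']
    group
  have hmain : A * B * A⁻¹ * B⁻¹ = T * (a * b * a⁻¹ * b⁻¹) * T⁻¹ := by
    rw [hA, hB]; group
  have hfin : T * (a * b * a⁻¹ * b⁻¹) * T⁻¹ ∈ N := by
    rw [← hmain, ← hkey]; exact hm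
  have h5 := hN.conj_mem _ hfin T⁻¹
  have heq : T⁻¹ * (T * (a * b * a⁻¹ * b⁻¹) * T⁻¹) * T⁻¹⁻¹ = a * b * a⁻¹ * b⁻¹ := by
    group
  rwa [heq] at h5

lemma stepD (G : Subgroup HH) (N : Subgroup ↥G) (hN : N.Normal) (hflex : Flexible G)
    (E : Set Cantor) (hE : IsClopen E) (hEne : E.Nonempty) (hEuniv : E ≠ Set.univ)
    (g₀ : ↥G) (hg₀N : g₀ ∈ N) (hg₀E : ∀ x ∈ E, (g₀ : HH) x ∉ E)
    (h1a : ∀ g ∈ G, ∃ k ∈ G, IsPair k g 1)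
    (h1b : ∀ g ∈ G, ∃ k ∈ G, IsPair k 1 g)
    (h1c : ∀ k ∈ G, (∀ ψ ∈ cone [true], k ψ = ψ) → ∃ g ∈ G, IsPair k g 1)
    (h1d : ∀ k ∈ G, (∀ ψ ∈ cone [false], k ψ = ψ) → ∃ g ∈ G, IsPair k 1 g)
    (h2 : ∀ g ∈ G, ∃ h ∈ G, IsPair h g h)
    (x₀ : HH) (hx₀G : x₀ ∈ G) (hx₀ : IsX0 x₀)
    (u : HH) (huG : u ∈ G) (hu : ∀ ψ ∉ cone [false, true], u ψ = ψ) :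
    (⟨u, huG⟩ : ↥G) ∈ N := by
  have X1 : ∀ ζ, x₀ (cons false (cons false ζ)) = cons false ζ := fun ζ => by
    have h := hx₀.1 ζ; rwa [prepend_two, prepend_one] at h
  have X2 : ∀ ζ, x₀ (cons false (cons true ζ)) = cons true (cons false ζ) := fun ζ => by
    have h := hx₀.2.1 ζ; rwa [prepend_two, prepend_two] at h
  have X3 : ∀ ζ, x₀ (cons true ζ) = cons true (cons true ζ) := fun ζ => by
    have h := hx₀.2.2 ζ; rwa [prepend_one, prepend_two] at h
  have Xinv1 : ∀ ζ, x₀⁻¹ (cons false ζ) = cons false (cons false ζ) := fun ζ => by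
    have h2 := inv_apply_apply x₀ (cons false (cons false ζ))
    rwa [X1] at h2
  have hu1 : ∀ ζ, u (cons true ζ) = cons true ζ := fun ζ => hu _ (by
    intro hc
    exact Bool.noConfusion (mem_cone_two.mp hc).1)
  have hu0 : ∀ ξ, u (cons false (cons false ξ)) = cons false (cons false ξ) := fun ξ => hu _ (by
    intro hc
    exact Bool.noConfusion (mem_cone_two.mp hc).2)
  obtain ⟨u₁, hu₁G, hPu⟩ := h1c u huG (fun ψ hψ => hu ψ (by
    intro hc
    have h1 := mem_cone_one.mp hψ
    have h2 := (mem_cone_two.mp hc).1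
    rw [h1] at h2
    exact Bool.noConfusion h2))
  have P1 : ∀ ζ, u (cons false ζ) = cons false (u₁ ζ) := fun ζ => by
    have h := hPu.1 ζ; rwa [prepend_one, prepend_one] at h
  have hu₁fix : ∀ ψ ∈ cone [false], u₁ ψ = ψ := by
    intro ψ hψ
    have h0 : ψ 0 = false := mem_cone_one.mp hψ
    have h1 : ψ = cons false (shift ψ) := by rw [← h0]; exact (cons_shift ψ).symm
    have h2 := P1 ψ
    rw [h1] at h2
    rw [hu0 (shift ψ)] at h2
    have h3 := cons_inj h2
    rw [← h1] at h3
    exact h3.symm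
  obtain ⟨ut, hutG, hPu₁⟩ := h1d u₁ hu₁G hu₁fix
  have Q2 : ∀ ζ, u₁ (cons true ζ) = cons true (ut ζ) := fun ζ => by
    have h := hPu₁.2 ζ; rwa [prepend_one, prepend_one] at h
  obtain ⟨w, hwG, hPw⟩ := h2 ut hutG
  have W1 : ∀ ζ, w (cons false ζ) = cons false (ut ζ) := fun ζ => by
    have h := hPw.1 ζ; rwa [prepend_one, prepend_one] at h
  have W2 : ∀ ζ, w (cons true ζ) = cons true (w ζ) := fun ζ => by
    have h := hPw.2 ζ; rwa [prepend_one, prepend_one] at h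
  obtain ⟨Wp, hWpG, hPWp⟩ := h1b w hwG
  have V1 : ∀ ζ, Wp (cons false ζ) = cons false ζ := fun ζ => by
    have h := hPWp.1 ζ; rwa [prepend_one, prepend_one] at h
  have V2 : ∀ ζ, Wp (cons true ζ) = cons true (w ζ) := fun ζ => by
    have h := hPWp.2 ζ; rwa [prepend_one, prepend_one] at h
  obtain ⟨y, hyG, hPy⟩ := h1a x₀ hx₀G
  have Y1 : ∀ ζ, y (cons false ζ) = cons false (x₀ ζ) := fun ζ => by
    have h := hPy.1 ζ; rwa [prepend_one, prepend_one] at h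
  have Y2 : ∀ ζ, y (cons true ζ) = cons true ζ := fun ζ => by
    have h := hPy.2 ζ; rwa [prepend_one, prepend_one] at h
  have Yinv1 : ∀ η, y⁻¹ (cons false η) = cons false (x₀⁻¹ η) := fun η => by
    have h1 : y (cons false (x₀⁻¹ η)) = cons false η := by rw [Y1, apply_inv_apply]
    have h2 := inv_apply_apply y (cons false (x₀⁻¹ η))
    rwa [h1] at h2
  have Yinv2 : ∀ ζ, y⁻¹ (cons true ζ) = cons true ζ := fun ζ => by
    have h2 := inv_apply_apply y (cons true ζ)
    rwa [Y2] at h2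
  set tt : HH := y⁻¹ * x₀ with htt
  set z : HH := Wp * u with hz
  have T1 : ∀ ξ, tt (cons false (cons false ξ)) = cons false (x₀⁻¹ ξ) := fun ξ => by
    show y⁻¹ (x₀ _) = _
    rw [X1, Yinv1]
  have T2 : ∀ ξ, tt (cons false (cons true ξ)) = cons true (cons false ξ) := fun ξ => by
    show y⁻¹ (x₀ _) = _
    rw [X2, Yinv2]
  have T3 : ∀ ζ, tt (cons true ζ) = cons true (cons true ζ) := fun ζ => by
    show y⁻¹ (x₀ _) = _
    rw [X3, Yinv2]
  have Z1 : ∀ ξ, z (cons false (cons false ξ)) = cons false (cons false ξ) := fun ξ => by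
    show Wp (u _) = _
    rw [hu0, V1]
  have Z2 : ∀ ξ, z (cons false (cons true ξ)) = cons false (cons true (ut ξ)) := fun ξ => by
    show Wp (u _) = _
    rw [P1, Q2, V1]
  have Z3 : ∀ ζ, z (cons true ζ) = cons true (w ζ) := fun ζ => by
    show Wp (u _) = _
    rw [hu1, V2]
  have key : ∀ ψ, tt (z ψ) = Wp (tt ψ) := by
    intro ψ
    cases hb0 : ψ 0 with
    | true =>
      have hψ : ψ = cons true (shift ψ) := by rw [← hb0]; exact (cons_shift ψ).symm
      rw [hψ]
      simp only [Z3, T3, V2, W2]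
    | false =>
      have hψ : ψ = cons false (shift ψ) := by rw [← hb0]; exact (cons_shift ψ).symm
      cases hb1 : (shift ψ) 0 with
      | true =>
        have hζ : shift ψ = cons true (shift (shift ψ)) := by
          rw [← hb1]; exact (cons_shift (shift ψ)).symm
        rw [hψ, hζ]
        simp only [Z2, T2, V2, W1]
      | false =>
        have hζ : shift ψ = cons false (shift (shift ψ)) := by
          rw [← hb1]; exact (cons_shift (shift ψ)).symm
        rw [hψ, hζ]
        simp only [Z1, T1, V1]
  have tz_eq : tt * z = Wp * tt := Homeomorph.ext fun ψ => key ψ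
  have h3 : tt * z * tt⁻¹ = Wp := by
    rw [tz_eq]
    exact mul_inv_cancel_right Wp tt
  have h4 : tt * z⁻¹ * tt⁻¹ = Wp⁻¹ := by rw [← h3]; group
  have ucomm : tt * z⁻¹ * tt⁻¹ * z = u := by
    rw [h4, hz]
    exact inv_mul_cancel_left Wp u
  have httG : tt ∈ G := G.mul_mem (G.inv_mem hyG) hx₀G
  have hzG : z ∈ G := G.mul_mem hWpG huG
  have tfix : ∀ x ∈ cone [false, false, false], tt x = x := by
    intro x hx
    obtain ⟨e0, e1, e2⟩ := mem_cone_three.mp hx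
    have hx' : x = cons false (cons false (cons false (shift (shift (shift x))))) := by
      funext n
      match n with
      | 0 => exact e0
      | 1 => exact e1
      | 2 => exact e2
      | (k+3) => rfl
    rw [hx', T1, Xinv1]
  have zfix : ∀ x ∈ cone [false, false, false], z x = x := by
    intro x hx
    obtain ⟨e0, e1, _⟩ := mem_cone_three.mp hx
    have hx' : x = cons false (cons false (shift (shift x))) := by
      funext n
      match n with
      | 0 => exact e0
      | 1 => exact e1
      | (k+2) => rfl
    rw [hx', Z1]
  set F : Set Cantor := (cone [false, false, false])ᶜ with hF
  have hFclopen : IsClopen F := (isClopen_cone _).compl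
  have hFne : F.Nonempty := ⟨(fun _ => true), by
    simp only [hF, Set.mem_compl_iff]
    intro hc
    exact Bool.noConfusion (mem_cone_three.mp hc).1⟩
  have hFuniv : F ≠ Set.univ := by
    intro hc
    have h1 : (fun _ => false) ∈ F := hc ▸ Set.mem_univ _
    rw [hF, Set.mem_compl_iff] at h1
    exact h1 (mem_cone_three.mpr ⟨rfl, rfl, rfl⟩)
  have htsupp : ∀ x ∉ F, tt x = x := by
    intro x hx
    simp only [hF, Set.mem_compl_iff, not_not] at hx
    exact tfix x hx
  have hzsupp : ∀ x ∉ F, z x = x := by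
    intro x hx
    simp only [hF, Set.mem_compl_iff, not_not] at hx
    exact zfix x hx
  have hzinvsupp : ∀ x ∉ F, z⁻¹ x = x := inv_fix hzsupp
  set ttG : ↥G := ⟨tt, httG⟩ with httG'
  set zG : ↥G := ⟨z, hzG⟩ with hzG'
  have hcomm := commutator_mem G N hN hflex E hE hEne hEuniv g₀ hg₀N hg₀E
    F hFclopen hFne hFuniv ttG zG⁻¹ htsupp hzinvsupp
  have hfinal : (⟨u, huG⟩ : ↥G) = ttG * zG⁻¹ * ttG⁻¹ * (zG⁻¹)⁻¹ := by
    apply Subtype.ext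
    show u = tt * z⁻¹ * tt⁻¹ * z⁻¹⁻¹
    rw [inv_inv]
    exact ucomm.symm
  rw [hfinal]
  exact hcomm

lemma smallSupport_mem (G : Subgroup HH) (N : Subgroup ↥G) (hN : N.Normal) (hflex : Flexible G)
    (E : Set Cantor) (hE : IsClopen E) (hEne : E.Nonempty) (hEuniv : E ≠ Set.univ)
    (g₀ : ↥G) (hg₀N : g₀ ∈ N) (hg₀E : ∀ x ∈ E, (g₀ : HH) x ∉ E)
    (h1a : ∀ g ∈ G, ∃ k ∈ G, IsPair k g 1)
    (h1b : ∀ g ∈ G, ∃ k ∈ G, IsPair k 1 g)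
    (h1c : ∀ k ∈ G, (∀ ψ ∈ cone [true], k ψ = ψ) → ∃ g ∈ G, IsPair k g 1)
    (h1d : ∀ k ∈ G, (∀ ψ ∈ cone [false], k ψ = ψ) → ∃ g ∈ G, IsPair k 1 g)
    (h2 : ∀ g ∈ G, ∃ h ∈ G, IsPair h g h)
    (x₀ : HH) (hx₀G : x₀ ∈ G) (hx₀ : IsX0 x₀)
    (v : HH) (hvG : v ∈ G) (S : Set Cantor) (hS : IsClopen S) (hSne : S.Nonempty)
    (hSuniv : S ≠ Set.univ) (hvS : ∀ x ∉ S, v x = x) :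
    (⟨v, hvG⟩ : ↥G) ∈ N := by
  have hC2clopen : IsClopen (cone [false, true]) := isClopen_cone _
  have hC2ne : (cone [false, true]).Nonempty :=
    ⟨cons false (cons true (fun _ => false)), mem_cone_two.mpr ⟨rfl, rfl⟩⟩
  have hC2univ : cone [false, true] ≠ Set.univ := by
    intro hc
    have h1 : (fun _ => true) ∈ cone [false, true] := hc ▸ Set.mem_univ _
    exact Bool.noConfusion (mem_cone_two.mp h1).1
  obtain ⟨s, hsG, hsim⟩ := hflex S (cone [false, true]) hS hSne hSuniv hC2clopen hC2ne hC2univ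
  set u : HH := s * v * s⁻¹ with hu'
  have huG : u ∈ G := G.mul_mem (G.mul_mem hsG hvG) (G.inv_mem hsG)
  have hu : ∀ ψ ∉ cone [false, true], u ψ = ψ := by
    intro ψ hψ
    have h1 : s⁻¹ ψ ∉ S := by
      intro hcmem
      exact hψ (hsim ⟨s⁻¹ ψ, hcmem, apply_inv_apply s ψ⟩)
    show s (v (s⁻¹ ψ)) = ψ
    rw [hvS _ h1, apply_inv_apply]
  have huN := stepD G N hN hflex E hE hEne hEuniv g₀ hg₀N hg₀E
    h1a h1b h1c h1d h2 x₀ hx₀G hx₀ u huG hu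
  set sG : ↥G := ⟨s, hsG⟩ with hsG'
  have hv : (⟨v, hvG⟩ : ↥G) = sG⁻¹ * ⟨u, huG⟩ * (sG⁻¹)⁻¹ := by
    apply Subtype.ext
    show v = s⁻¹ * (s * v * s⁻¹) * s⁻¹⁻¹
    group
  rw [hv]
  exact hN.conj_mem _ huN _

end FFS
open FFS

/-- a full, flexible group of homeomorphisms of the Cantor space that is
closed under the pairing operations, admits `(g, h)`-fixed points, and contains the
first generator `x₀` of Thompson's group `F`, is simple. -/
theorem full_flexible_simple (G : Subgroup (Cantor ≃ₜ Cantor))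
    (hfull : Full G) (hflex : Flexible G)
    (h1a : ∀ g ∈ G, ∃ k ∈ G, IsPair k g 1)
    (h1b : ∀ g ∈ G, ∃ k ∈ G, IsPair k 1 g)
    (h1c : ∀ k ∈ G, (∀ ψ ∈ cone [true], k ψ = ψ) → ∃ g ∈ G, IsPair k g 1)
    (h1d : ∀ k ∈ G, (∀ ψ ∈ cone [false], k ψ = ψ) → ∃ g ∈ G, IsPair k 1 g)
    (h2 : ∀ g ∈ G, ∃ h ∈ G, IsPair h g h)
    (h3 : ∃ x₀ ∈ G, IsX0 x₀) :
    IsSimpleGroup ↥G := by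
  classical
  obtain ⟨x₀, hx₀G, hx₀⟩ := h3
  have X3 : ∀ ζ, x₀ (cons true ζ) = cons true (cons true ζ) := fun ζ => by
    have h := hx₀.2.2 ζ; rwa [prepend_one, prepend_two] at h
  have hx₀ne : (⟨x₀, hx₀G⟩ : ↥G) ≠ 1 := by
    intro hc
    have hc' : x₀ = (1 : HH) := congrArg Subtype.val hc
    have h1 := X3 (fun _ => false)
    rw [hc'] at h1
    have h2 := congrFun h1 1
    simp [one_apply, cons] at h2
  haveI : Nontrivial ↥G := ⟨⟨⟨x₀, hx₀G⟩, 1, hx₀ne⟩⟩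
  refine ⟨fun N hN => ?_⟩
  by_cases hbot : N = ⊥
  · exact Or.inl hbot
  right
  rw [Subgroup.eq_top_iff']
  obtain ⟨g₀, hg₀N, hg₀ne⟩ : ∃ x ∈ N, x ≠ 1 := by
    by_contra hc
    push_neg at hc
    exact hbot ((Subgroup.eq_bot_iff_forall N).mpr hc)
  have hg₀move : ∃ ψ, (g₀ : HH) ψ ≠ ψ := by
    by_contra hc
    push_neg at hc
    exact hg₀ne (Subtype.ext (Homeomorph.ext hc))
  obtain ⟨E, D, hEclopen, hDclopen, hEne, hEmap, hED, ζ₀, hζ₀E, hζ₀D⟩ := separation hg₀move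
  have hEuniv : E ≠ Set.univ := fun hc => hζ₀E (hc ▸ Set.mem_univ ζ₀)
  have hg₀E : ∀ x ∈ E, (g₀ : HH) x ∉ E := fun x hx hc => hED _ hc (hEmap x hx)
  intro g
  by_cases hg1 : g = 1
  · rw [hg1]; exact N.one_mem
  have hgmove : ∃ ψ, (g : HH) ψ ≠ ψ := by
    by_contra hc
    push_neg at hc
    exact hg1 (Subtype.ext (Homeomorph.ext hc))
  obtain ⟨C, D', hCclopen, hD'clopen, hCne, hCmap, hCD', ζ, hζC, hζD'⟩ := separation hgmove
  set gg : HH := (g : HH) with hgg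
  set im : Set Cantor := ⇑gg '' C with him
  have himeq : im = ⇑gg.symm ⁻¹' C := (congrFun (Homeomorph.preimage_symm gg) C).symm
  have himclopen : IsClopen im := by
    rw [himeq]
    exact hCclopen.preimage gg.symm.continuous
  have himD : ∀ x ∈ im, x ∈ D' := by
    rintro x ⟨c, hc, rfl⟩
    exact hCmap c hc
  have hCim : ∀ x ∈ C, x ∉ im := fun x hx hximg => hCD' x hx (himD _ hximg)
  set ρ : Cantor → Cantor :=
    fun x => if x ∈ C then gg x else if x ∈ im then gg.symm x else x with hρ
  have hρC : ∀ x ∈ C, ρ x = gg x := fun x hx => by simp only [hρ, if_pos hx]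
  have hρim : ∀ x ∈ im, ρ x = gg.symm x := fun x hx => by
    have hxC : x ∉ C := fun hc => hCim x hc hx
    simp only [hρ, if_neg hxC, if_pos hx]
  have hρelse : ∀ x, x ∉ C → x ∉ im → ρ x = x := fun x hc1 hc2 => by
    simp only [hρ, if_neg hc1, if_neg hc2]
  have hρρ : ∀ x, ρ (ρ x) = x := by
    intro x
    by_cases hc1 : x ∈ C
    · rw [hρC x hc1]
      have hc2 : gg x ∈ im := Set.mem_image_of_mem _ hc1
      rw [hρim _ hc2, Homeomorph.symm_apply_apply]
    · by_cases hc2 : x ∈ im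
      · rw [hρim x hc2]
        have hc3 : gg.symm x ∈ C := by
          rw [himeq] at hc2
          exact hc2
        rw [hρC _ hc3, Homeomorph.apply_symm_apply]
      · rw [hρelse x hc1 hc2, hρelse x hc1 hc2]
  have hρcont : Continuous ρ := by
    rw [continuous_iff_continuousAt]
    intro x
    by_cases hc1 : x ∈ C
    · apply gg.continuous.continuousAt.congr
      filter_upwards [hCclopen.isOpen.mem_nhds hc1] with y hy
      exact (hρC y hy).symm
    · by_cases hc2 : x ∈ im
      · apply gg.symm.continuous.continuousAt.congr
        filter_upwards [himclopen.isOpen.mem_nhds hc2] with y hy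
        exact (hρim y hy).symm
      · apply continuousAt_id.congr
        have hopen : IsOpen ((C ∪ im)ᶜ) :=
          (hCclopen.isClosed.union himclopen.isClosed).isOpen_compl
        have hxmem : x ∈ (C ∪ im)ᶜ := by
          intro hc
          rcases hc with hc | hc
          · exact hc1 hc
          · exact hc2 hc
        filter_upwards [hopen.mem_nhds hxmem] with y hy
        have hy1 : y ∉ C := fun hc => hy (Or.inl hc)
        have hy2 : y ∉ im := fun hc => hy (Or.inr hc)
        exact (hρelse y hy1 hy2).symm
  set r : HH := ⟨⟨ρ, ρ, hρρ, hρρ⟩, hρcont, hρcont⟩ with hr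
  have hrapp : ∀ x, r x = ρ x := fun _ => rfl
  have hrinvapp : ∀ x, r⁻¹ x = ρ x := fun _ => rfl
  have hrG : r ∈ G := by
    apply hfull
    intro p
    by_cases hc1 : p ∈ C
    · exact ⟨C, hCclopen.isOpen, hc1, gg, g.2, fun x hx => by rw [hrapp, hρC x hx]⟩
    · by_cases hc2 : p ∈ im
      · refine ⟨im, himclopen.isOpen, hc2, gg⁻¹, G.inv_mem g.2, fun x hx => ?_⟩
        rw [hrapp, hρim x hx]
        rfl
      · refine ⟨(C ∪ im)ᶜ, (hCclopen.isClosed.union himclopen.isClosed).isOpen_compl, ?_, 1,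
          G.one_mem, fun x hx => ?_⟩
        · intro hc
          rcases hc with hc | hc
          · exact hc1 hc
          · exact hc2 hc
        · have hy1 : x ∉ C := fun hc => hx (Or.inl hc)
          have hy2 : x ∉ im := fun hc => hx (Or.inr hc)
          rw [hrapp, hρelse x hy1 hy2]
          rfl
  have hrsupp : ∀ x ∉ C ∪ im, r x = x := by
    intro x hx
    have hy1 : x ∉ C := fun hc => hx (Or.inl hc)
    have hy2 : x ∉ im := fun hc => hx (Or.inr hc)
    rw [hrapp, hρelse x hy1 hy2]
  have hCupne : (C ∪ im).Nonempty := hCne.mono Set.subset_union_left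
  have hCupuniv : C ∪ im ≠ Set.univ := by
    intro hc
    have h1 : ζ ∈ C ∪ im := hc ▸ Set.mem_univ ζ
    rcases h1 with h1 | h1
    · exact hζC h1
    · exact hζD' (himD _ h1)
  set v : HH := r⁻¹ * gg with hv
  have hvG : v ∈ G := G.mul_mem (G.inv_mem hrG) g.2
  have hvfix : ∀ x ∈ C, v x = x := by
    intro x hx
    have h1 : gg x ∈ im := Set.mem_image_of_mem _ hx
    show r⁻¹ (gg x) = x
    rw [hrinvapp, hρim _ h1, Homeomorph.symm_apply_apply]
  have hvsupp : ∀ x ∉ Cᶜ, v x = x := fun x hx => hvfix x (by simpa using hx)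
  have hCcne : (Cᶜ).Nonempty := ⟨ζ, hζC⟩
  have hCcuniv : Cᶜ ≠ Set.univ := by
    intro hc
    obtain ⟨c0, hc0⟩ := hCne
    have h1 : c0 ∈ Cᶜ := hc ▸ Set.mem_univ c0
    exact h1 hc0
  have hrN : (⟨r, hrG⟩ : ↥G) ∈ N := smallSupport_mem G N hN hflex E hEclopen hEne hEuniv
    g₀ hg₀N hg₀E h1a h1b h1c h1d h2 x₀ hx₀G hx₀ r hrG (C ∪ im)
    (hCclopen.union himclopen) hCupne hCupuniv hrsupp
  have hvN : (⟨v, hvG⟩ : ↥G) ∈ N := smallSupport_mem G N hN hflex E hEclopen hEne hEuniv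
    g₀ hg₀N hg₀E h1a h1b h1c h1d h2 x₀ hx₀G hx₀ v hvG Cᶜ
    hCclopen.compl hCcne hCcuniv hvsupp
  have hgeq : g = ⟨r, hrG⟩ * ⟨v, hvG⟩ := by
    apply Subtype.ext
    show gg = r * (r⁻¹ * gg)
    group
  rw [hgeq]
  exact N.mul_mem hrN hvN
end
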